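/- If there is a feasible solution x to (IP) with objective value v = ∑_{j,t} f_j(t) x_{jt}, then there is a feasible solution x' to (IP') with objective value ∑_{j∈𝒥} ∑_{t∈𝒯̂} f'_j(t) x'_{jt} at most (1+ε)·v. -/

import Mathlib

open Finset
open scoped Classical

/-- `t` belongs to class `k` of the cost function `g`: class `0` is `{t : g t = 0}` and,
for `k ≥ 1`, class `k` is `{t : (1+ε)^(k−1) ≤ g t < (1+ε)^k}`. -/
def InClass (ε : ℝ) (g : ℕ → ℕ) (k t : ℕ) : Prop :=
  if k = 0 then g t = 0
  else (1 + ε) ^ (k - 1) ≤ (g t : ℝ) ∧ (g t : ℝ) < (1 + ε) ^ k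

/-- The set `𝒯̂_j` of left endpoints: the times `t ∈ 𝒯 = {1,…,T}` that are the minimum
element of some (nonempty) class of `g`. -/
noncomputable def leftEnds (T : ℕ) (ε : ℝ) (g : ℕ → ℕ) : Finset ℕ :=
  (Icc 1 T).filter fun t => ∃ k : ℕ,
    InClass ε g k t ∧ ∀ s ∈ Icc 1 T, InClass ε g k s → t ≤ s

/-- The set of interval endpoints `𝒯̂ = (∪_{j∈𝒥} 𝒯̂_j) ∪ {1}`. -/
noncomputable def That {n : ℕ} (T : ℕ) (ε : ℝ) (f : Fin n → ℕ → ℕ) : Finset ℕ :=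
  (univ.biUnion fun j => leftEnds T ε (f j)) ∪ {1}

/-- The rounded cost function `f'`: writing `𝒯̂ = {t_1 < t_2 < ⋯ < t_τ}`, we set
`f'_j(t_i) = f_j(t_{i+1} − 1)` for `i < τ` and `f'_j(t_τ) = f_j(T)`.  (For `t ∈ 𝒯̂`, the
`min` below is the next endpoint of `𝒯̂` after `t`, or `T + 1` if there is none.) -/
noncomputable def fround {n : ℕ} (T : ℕ) (ε : ℝ) (f : Fin n → ℕ → ℕ)
    (j : Fin n) (t : ℕ) : ℕ :=
  f j ((((That T ε f).filter fun s => t < s).min.untopD (T + 1)) - 1)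

noncomputable def prvT {n : ℕ} (T : ℕ) (ε : ℝ) (f : Fin n → ℕ → ℕ) (u : ℕ) : ℕ :=
  (((That T ε f).filter fun s => s ≤ u).max).unbotD 0

lemma one_mem_That {n : ℕ} (T : ℕ) (ε : ℝ) (f : Fin n → ℕ → ℕ) : 1 ∈ That T ε f := by
  simp [That]

lemma That_subset_Icc {n : ℕ} {T : ℕ} (hT1 : 1 ≤ T) (ε : ℝ) (f : Fin n → ℕ → ℕ) :
    That T ε f ⊆ Icc 1 T := by
  intro t ht
  rcases Finset.mem_union.1 ht with h | h
  · rcases Finset.mem_biUnion.1 h with ⟨j, _, hj⟩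
    exact Finset.mem_of_mem_filter _ hj
  · simp_all [Finset.mem_Icc]

lemma prvT_spec {n : ℕ} (T : ℕ) (ε : ℝ) (f : Fin n → ℕ → ℕ) {u : ℕ} (hu : 1 ≤ u) :
    prvT T ε f u ∈ That T ε f ∧ prvT T ε f u ≤ u ∧
      ∀ s ∈ That T ε f, s ≤ u → s ≤ prvT T ε f u := by
  have hne : ((That T ε f).filter fun s => s ≤ u).Nonempty :=
    ⟨1, Finset.mem_filter.2 ⟨one_mem_That T ε f, hu⟩⟩
  have hmax : prvT T ε f u = ((That T ε f).filter fun s => s ≤ u).max' hne := by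
    rw [prvT, ← Finset.coe_max' hne, WithBot.unbotD_coe]
  have hmem := Finset.mem_filter.1 (Finset.max'_mem _ hne)
  refine ⟨by rw [hmax]; exact hmem.1, by rw [hmax]; exact hmem.2, fun s hs hsu => ?_⟩
  rw [hmax]
  apply Finset.le_max'
  exact Finset.mem_filter.2 ⟨hs, hsu⟩

lemma fround_prvT_le {n : ℕ} {ε : ℝ} (hε : 0 < ε) {T : ℕ}
    (f : Fin n → ℕ → ℕ)
    (hfmono : ∀ j, ∀ s t : ℕ, s ≤ t → t ≤ T → f j s ≤ f j t)
    (j : Fin n) {u : ℕ} (hu1 : 1 ≤ u) (huT : u ≤ T) :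
    (fround T ε f j (prvT T ε f u) : ℝ) ≤ (1 + ε) * (f j u : ℝ) := by
  obtain ⟨htmem, htu, htmax⟩ := prvT_spec T ε f hu1
  set t := prvT T ε f u with hdt
  have hfr : fround T ε f j t =
      f j ((((That T ε f).filter fun s => t < s).min.untopD (T + 1)) - 1) := rfl
  set m := ((((That T ε f).filter fun s => t < s).min.untopD (T + 1)) - 1) with hm
  have hkey : u ≤ m ∧ m ≤ T ∧ ∀ s ∈ That T ε f, s ≤ m → s ≤ t := by
    rcases ((That T ε f).filter fun s => t < s).eq_empty_or_nonempty with hFe | hFne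
    · have hmeq : m = T := by
        rw [hm, hFe, Finset.min_empty, WithTop.untopD_top]
        omega
      refine ⟨hmeq ▸ huT, le_of_eq hmeq, fun s hs _ => ?_⟩
      by_contra hst
      have : s ∈ (That T ε f).filter fun s => t < s :=
        Finset.mem_filter.2 ⟨hs, lt_of_not_ge hst⟩
      simp [hFe] at this
    · have hmin : (((That T ε f).filter fun s => t < s).min.untopD (T + 1)) =
          ((That T ε f).filter fun s => t < s).min' hFne := by
        rw [← Finset.coe_min' hFne, WithTop.untopD_coe]
      have hmem := Finset.mem_filter.1 (Finset.min'_mem _ hFne)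
      have hum : u < ((That T ε f).filter fun s => t < s).min' hFne := by
        by_contra h
        exact absurd (htmax _ hmem.1 (le_of_not_gt h)) (not_le.2 hmem.2)
      have hmT : ((That T ε f).filter fun s => t < s).min' hFne ≤ T :=
        (Finset.mem_Icc.1 (That_subset_Icc (hu1.trans huT) ε f hmem.1)).2
      refine ⟨by omega, by omega, fun s hs hsm => ?_⟩
      by_contra hst
      have hsF : s ∈ (That T ε f).filter fun s => t < s :=
        Finset.mem_filter.2 ⟨hs, lt_of_not_ge hst⟩
      have := Finset.min'_le _ s hsF
      omega
  obtain ⟨hum, hmT, hnogap⟩ := hkey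
  rw [hfr]
  rcases Nat.eq_zero_or_pos (f j m) with h0 | hpos
  · rw [h0]
    simp only [Nat.cast_zero]
    positivity
  · have hex : ∃ k : ℕ, (f j m : ℝ) < (1 + ε) ^ k :=
      pow_unbounded_of_one_lt _ (by linarith)
    have hku : (f j m : ℝ) < (1 + ε) ^ Nat.find hex := Nat.find_spec hex
    set k := Nat.find hex with hk
    have hk0 : k ≠ 0 := by
      intro h
      have h1 : (1 : ℝ) ≤ (f j m : ℝ) := by exact_mod_cast hpos
      rw [h, pow_zero] at hku
      linarith
    have hklb : (1 + ε) ^ (k - 1) ≤ (f j m : ℝ) := by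
      have := Nat.find_min hex (m := k - 1) (by omega)
      exact le_of_not_gt this
    have hcls : InClass ε (f j) k m := by
      rw [InClass, if_neg hk0]; exact ⟨hklb, hku⟩
    have hmS : m ∈ (Icc 1 T).filter (InClass ε (f j) k) :=
      Finset.mem_filter.2 ⟨Finset.mem_Icc.2 ⟨hu1.trans hum, hmT⟩, hcls⟩
    have hne : ((Icc 1 T).filter (InClass ε (f j) k)).Nonempty := ⟨m, hmS⟩
    set t0 := ((Icc 1 T).filter (InClass ε (f j) k)).min' hne with ht0
    have ht0S := Finset.mem_filter.1 (Finset.min'_mem _ hne)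
    have ht0mem : t0 ∈ That T ε f := by
      apply Finset.mem_union_left
      apply Finset.mem_biUnion.2
      refine ⟨j, Finset.mem_univ j, ?_⟩
      rw [leftEnds, Finset.mem_filter]
      exact ⟨ht0S.1, k, ht0S.2, fun s hs hcs =>
        Finset.min'_le _ s (Finset.mem_filter.2 ⟨hs, hcs⟩)⟩
    have ht0m : t0 ≤ m := Finset.min'_le _ m hmS
    have ht0t : t0 ≤ t := hnogap t0 ht0mem ht0m
    have ht0cls := ht0S.2
    rw [InClass, if_neg hk0] at ht0cls
    have hmono : (f j t0 : ℝ) ≤ (f j u : ℝ) := by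
      exact_mod_cast hfmono j t0 u (ht0t.trans htu) huT
    have hpow : (1 + ε) ^ k = (1 + ε) * (1 + ε) ^ (k - 1) := by
      rw [← pow_succ']
      congr 1
      omega
    have h1ε : (0 : ℝ) < 1 + ε := by linarith
    have hfin : (f j m : ℝ) < (1 + ε) * (f j u : ℝ) := by
      calc (f j m : ℝ) < (1 + ε) ^ k := hku
        _ = (1 + ε) * (1 + ε) ^ (k - 1) := hpow
        _ ≤ (1 + ε) * (f j t0 : ℝ) := mul_le_mul_of_nonneg_left ht0cls.1 (le_of_lt h1ε)
        _ ≤ (1 + ε) * (f j u : ℝ) := mul_le_mul_of_nonneg_left hmono (le_of_lt h1ε)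
    exact le_of_lt hfin

/-- If there is a feasible solution `x` to (IP) with objective value
`v = ∑_{j,t} f_j(t) x_{jt}`, then there is a feasible solution `x'` to (IP') with
objective value `∑_{j∈𝒥} ∑_{t∈𝒯̂} f'_j(t) x'_{jt}` at most `(1+ε)·v`.
(Here `D(t) = T − t + 1`, written as the truncated subtraction `T + 1 - t`.) -/
theorem stmt_12 {n : ℕ} (ε : ℝ) (hε : 0 < ε)
    (p : Fin n → ℕ) (hp : ∀ j, 0 < p j)
    (T : ℕ) (hT : T = ∑ j, p j)
    (f : Fin n → ℕ → ℕ) (hf0 : ∀ j, f j 0 = 0)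
    (hfmono : ∀ j, ∀ s t : ℕ, s ≤ t → t ≤ T → f j s ≤ f j t)
    (x : Fin n → ℕ → ℕ)
    (hx01 : ∀ j t, x j t = 0 ∨ x j t = 1)
    (hxa : ∀ j, ∑ t ∈ Icc 1 T, x j t = 1)
    (hxc : ∀ t ∈ Icc 1 T, T + 1 - t ≤ ∑ j, ∑ s ∈ Icc t T, p j * x j s) :
    ∃ x' : Fin n → ℕ → ℕ,
      (∀ j t, x' j t = 0 ∨ x' j t = 1) ∧
      (∀ j, ∑ t ∈ That T ε f, x' j t = 1) ∧
      (∀ t ∈ That T ε f,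
        T + 1 - t ≤ ∑ j, ∑ s ∈ (That T ε f).filter (fun s => t ≤ s), p j * x' j s) ∧
      (∑ j, ∑ t ∈ That T ε f, (fround T ε f j t : ℝ) * (x' j t : ℝ)) ≤
        (1 + ε) * ∑ j, ∑ t ∈ Icc 1 T, (f j t : ℝ) * (x j t : ℝ) := by
  rcases Nat.eq_zero_or_pos T with hT0 | hT1
  · -- degenerate case: T = 0 forces n = 0
    have hn : n = 0 := by
      by_contra h
      have hpos : 0 < ∑ j, p j :=
        Finset.sum_pos (fun j _ => hp j)
          (Finset.univ_nonempty_iff.2 ⟨⟨0, Nat.pos_of_ne_zero h⟩⟩)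
      omega
    subst hn
    refine ⟨fun _ _ => 0, fun j t => Or.inl rfl, fun j => j.elim0, fun t ht => ?_, ?_⟩
    · have h1t : 1 ≤ t := by
        rcases Finset.mem_union.1 ht with h | h
        · rcases Finset.mem_biUnion.1 h with ⟨j, _, hj⟩
          exact (Finset.mem_Icc.1 (Finset.mem_of_mem_filter _ hj)).1
        · simp_all
      have : ∑ j : Fin 0, ∑ s ∈ (That T ε f).filter (fun s => t ≤ s), p j * 0 = 0 := rfl
      simp only [Finset.univ_eq_empty, Finset.sum_empty]
      omega
    · simp
  · have hsub : That T ε f ⊆ Icc 1 T := That_subset_Icc hT1 ε f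
    have hmaps : ∀ u ∈ Icc 1 T, prvT T ε f u ∈ That T ε f := fun u hu =>
      (prvT_spec T ε f (Finset.mem_Icc.1 hu).1).1
    refine ⟨fun j t => ∑ u ∈ (Icc 1 T).filter (fun u => prvT T ε f u = t), x j u,
      ?_, ?_, ?_, ?_⟩
    · intro j t
      have hle : ∑ u ∈ (Icc 1 T).filter (fun u => prvT T ε f u = t), x j u ≤
          ∑ u ∈ Icc 1 T, x j u :=
        Finset.sum_le_sum_of_subset (Finset.filter_subset _ _)
      rw [hxa j] at hle
      exact Nat.le_one_iff_eq_zero_or_eq_one.1 hle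
    · intro j
      rw [Finset.sum_fiberwise_of_maps_to hmaps, hxa j]
    · intro t ht
      have hset : ∀ j : Fin n,
          ∑ s ∈ (That T ε f).filter (fun s => t ≤ s),
            p j * ∑ u ∈ (Icc 1 T).filter (fun u => prvT T ε f u = s), x j u =
          ∑ u ∈ Icc t T, p j * x j u := by
        intro j
        have h1 : ∀ s ∈ (That T ε f).filter (fun s => t ≤ s),
            p j * ∑ u ∈ (Icc 1 T).filter (fun u => prvT T ε f u = s), x j u =
            ∑ u ∈ (Icc 1 T).filter (fun u => prvT T ε f u = s), p j * x j u := by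
          intro s _
          rw [Finset.mul_sum]
        rw [Finset.sum_congr rfl h1,
          Finset.sum_fiberwise_eq_sum_filter (Icc 1 T)
            ((That T ε f).filter (fun s => t ≤ s)) (prvT T ε f) (fun u => p j * x j u)]
        congr 1
        ext u
        simp only [Finset.mem_filter, Finset.mem_Icc]
        constructor
        · rintro ⟨⟨h1u, huT⟩, hmem, hts⟩
          exact ⟨hts.trans (prvT_spec T ε f h1u).2.1, huT⟩
        · rintro ⟨htu, huT⟩
          have h1t : 1 ≤ t := (Finset.mem_Icc.1 (hsub ht)).1
          have h1u : 1 ≤ u := h1t.trans htu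
          exact ⟨⟨h1u, huT⟩, (prvT_spec T ε f h1u).1,
            (prvT_spec T ε f h1u).2.2 t ht htu⟩
      calc T + 1 - t ≤ ∑ j, ∑ s ∈ Icc t T, p j * x j s := hxc t (hsub ht)
        _ = _ := by
            refine Finset.sum_congr rfl fun j _ => ?_
            rw [hset j]
    · have key : ∀ j : Fin n,
          ∑ t ∈ That T ε f, (fround T ε f j t : ℝ) *
            ((∑ u ∈ (Icc 1 T).filter (fun u => prvT T ε f u = t), x j u : ℕ) : ℝ) ≤
          (1 + ε) * ∑ t ∈ Icc 1 T, (f j t : ℝ) * (x j t : ℝ) := by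
        intro j
        have h1 : ∀ t ∈ That T ε f, (fround T ε f j t : ℝ) *
            ((∑ u ∈ (Icc 1 T).filter (fun u => prvT T ε f u = t), x j u : ℕ) : ℝ) =
            ∑ u ∈ (Icc 1 T).filter (fun u => prvT T ε f u = t),
              (fround T ε f j (prvT T ε f u) : ℝ) * (x j u : ℝ) := by
          intro t _
          rw [Nat.cast_sum, Finset.mul_sum]
          refine Finset.sum_congr rfl fun u hu => ?_
          rw [(Finset.mem_filter.1 hu).2]
        rw [Finset.sum_congr rfl h1, Finset.sum_fiberwise_of_maps_to hmaps]
        calc ∑ u ∈ Icc 1 T, (fround T ε f j (prvT T ε f u) : ℝ) * (x j u : ℝ)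
            ≤ ∑ u ∈ Icc 1 T, ((1 + ε) * (f j u : ℝ)) * (x j u : ℝ) := by
              refine Finset.sum_le_sum fun u hu => ?_
              have huIcc := Finset.mem_Icc.1 hu
              exact mul_le_mul_of_nonneg_right
                (fround_prvT_le hε f hfmono j huIcc.1 huIcc.2) (by positivity)
          _ = (1 + ε) * ∑ t ∈ Icc 1 T, (f j t : ℝ) * (x j t : ℝ) := by
              rw [Finset.mul_sum]
              exact Finset.sum_congr rfl fun u _ => by ring
      calc ∑ j, ∑ t ∈ That T ε f, (fround T ε f j t : ℝ) *
            ((∑ u ∈ (Icc 1 T).filter (fun u => prvT T ε f u = t), x j u : ℕ) : ℝ)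
          ≤ ∑ j, (1 + ε) * ∑ t ∈ Icc 1 T, (f j t : ℝ) * (x j t : ℝ) :=
            Finset.sum_le_sum fun j _ => key j
        _ = (1 + ε) * ∑ j, ∑ t ∈ Icc 1 T, (f j t : ℝ) * (x j t : ℝ) := by
            rw [Finset.mul_sum]
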